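/- Let B be a real M × M matrix whose entries satisfy b_{ii} = −max_{1≤r≤M} Σ_{j≠r} |b_{rj}| for every i, let a > 0 and set A := aI − B. Then for every c > 0 and every V ∈ ℝ^M one has ‖AV + cV³‖∞ ≥ a‖V‖∞ + c‖V‖∞³, where V³ denotes the componentwise cube and ‖V‖∞ := max_{1≤i≤M} |V_i|. -/

import Mathlib

/-!
STATEMENT 7: If the real `M × M` matrix `B` satisfies
`b_{ii} = −max_{1≤r≤M} Σ_{j≠r} |b_{rj}|` for every `i`, `a > 0` and
`A := aI − B`, then for every `c > 0` and `V ∈ ℝ^M`,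
`‖AV + cV³‖∞ ≥ a‖V‖∞ + c‖V‖∞³` (componentwise cube).
(The norm on `Fin M → ℝ` is the sup norm `‖V‖ = max_i |V_i|`.)
-/

open Finset

theorem matrix_inf_norm_lower_bound_cubic
    (M : ℕ) (B : Matrix (Fin M) (Fin M) ℝ)
    (hB : ∀ i : Fin M,
      IsGreatest {x : ℝ | ∃ r : Fin M, x = ∑ j ∈ Finset.univ.erase r, |B r j|}
        (-(B i i)))
    (a : ℝ) (ha : 0 < a) (c : ℝ) (hc : 0 < c) (V : Fin M → ℝ) :
    a * ‖V‖ + c * ‖V‖ ^ 3 ≤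
      ‖(a • (1 : Matrix (Fin M) (Fin M) ℝ) - B).mulVec V +
        c • (fun i => (V i) ^ 3)‖ := by
  rcases Nat.eq_zero_or_pos M with hM | hM
  · subst hM
    have hV : V = 0 := Subsingleton.elim _ _
    subst hV
    simp only [norm_zero, Matrix.mulVec_zero, mul_zero, zero_pow, smul_zero]
    norm_num
  haveI : Nonempty (Fin M) := ⟨⟨0, hM⟩⟩
  obtain ⟨i, hi⟩ := Finite.exists_max (fun i => |V i|)
  have hVi : ‖V‖ = |V i| := by
    apply le_antisymm
    · exact (pi_norm_le_iff_of_nonneg (abs_nonneg _)).2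
        (fun j => by rw [Real.norm_eq_abs]; exact hi j)
    · rw [← Real.norm_eq_abs]; exact norm_le_pi_norm V i
  set W := (a • (1 : Matrix (Fin M) (Fin M) ℝ) - B).mulVec V +
      c • (fun i => (V i) ^ 3) with hWdef
  have hnormW : |W i| ≤ ‖W‖ := by
    rw [← Real.norm_eq_abs]; exact norm_le_pi_norm W i
  set s : ℝ := -(B i i) with hs
  set T : ℝ := ∑ j ∈ Finset.univ.erase i, B i j * V j with hT
  have hWi : W i = a * V i + s * V i + c * V i ^ 3 - T := by
    have h1 : W i = a * V i - ∑ j, B i j * V j + c * V i ^ 3 := by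
      simp [hWdef, Matrix.sub_mulVec, Matrix.smul_mulVec, Matrix.one_mulVec,
        Matrix.mulVec, dotProduct]
    rw [h1, ← Finset.add_sum_erase Finset.univ (fun j => B i j * V j) (Finset.mem_univ i)]
    ring_nf
    rw [hs, hT]; ring
  obtain ⟨⟨r, hr⟩, hub⟩ := hB i
  have hs0 : 0 ≤ s := by
    rw [hs, hr]; positivity
  have hsi : ∑ j ∈ Finset.univ.erase i, |B i j| ≤ s :=
    hub ⟨i, rfl⟩
  have hTb : |T| ≤ s * |V i| := by
    calc |T| ≤ ∑ j ∈ Finset.univ.erase i, |B i j * V j| := Finset.abs_sum_le_sum_abs _ _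
    _ ≤ ∑ j ∈ Finset.univ.erase i, |B i j| * |V i| := by
        apply Finset.sum_le_sum
        intro j _
        rw [abs_mul]
        exact mul_le_mul_of_nonneg_left (hi j) (abs_nonneg _)
    _ = (∑ j ∈ Finset.univ.erase i, |B i j|) * |V i| := by rw [Finset.sum_mul]
    _ ≤ s * |V i| := mul_le_mul_of_nonneg_right hsi (abs_nonneg _)
  rw [hVi]
  refine le_trans ?_ hnormW
  rcases le_or_gt 0 (V i) with hv | hv
  · have habs : |V i| = V i := abs_of_nonneg hv
    rw [habs] at hTb ⊢
    have hTle : T ≤ s * V i := le_trans (le_abs_self T) hTb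
    have : a * V i + c * V i ^ 3 ≤ W i := by rw [hWi]; nlinarith
    exact le_trans this (le_abs_self _)
  · have habs : |V i| = -V i := abs_of_neg hv
    rw [habs] at hTb ⊢
    have hTle : -T ≤ s * -V i := le_trans (neg_le_abs T) hTb
    have : a * -V i + c * (-V i) ^ 3 ≤ -W i := by rw [hWi]; nlinarith
    exact le_trans this (neg_le_abs _)
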